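/- Define θ(a,b,c) = (Δ_{x+y+z}! · Δ_{x-1}! · Δ_{y-1}! · Δ_{z-1}!)/(Δ_{y+z-1}! · Δ_{z+x-1}! · Δ_{x+y-1}!) where a = y+z, b = z+x, c = x+y. For n ≥ 1 and 1 ≤ j ≤ n, the minimum degree satisfies d(Δ_{2j}/θ(n,n,2j)) = d(Δ_{2(j-1)}/θ(n,n,2(j-1))) - 2. -/

import Mathlib

/-- The minimum degree of a rational function in `A`, i.e. the minimal exponent
appearing in its Laurent series expansion at `A = 0`. -/
noncomputable def d (f : RatFunc ℚ) : ℤ := (↑f : LaurentSeries ℚ).order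

/-- The quantum integer `Δ_n = (-1)^n (A^{2(n+1)} - A^{-2(n+1)})/(A^2 - A^{-2})`. -/
noncomputable def Δ (n : ℕ) : RatFunc ℚ :=
  (-1) ^ n * ((RatFunc.X ^ (2 * (n : ℤ) + 2) - RatFunc.X ^ (-(2 * (n : ℤ) + 2))) /
    (RatFunc.X ^ (2 : ℤ) - RatFunc.X ^ (-2 : ℤ)))

/-- `Δ_m! = Δ_m Δ_{m-1} ⋯ Δ_1`, with `Δ_0! = 1` (and `Δ_{-1}! = 1`, handled by
truncated subtraction). -/
noncomputable def Δfact : ℕ → RatFunc ℚ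
  | 0 => 1
  | (m + 1) => Δ (m + 1) * Δfact m

/-- `θ(a,b,c) = Δ_{x+y+z}! Δ_{x-1}! Δ_{y-1}! Δ_{z-1}! / (Δ_{y+z-1}! Δ_{z+x-1}! Δ_{x+y-1}!)`
where `a = y + z`, `b = z + x`, `c = x + y`. -/
noncomputable def θ (a b c : ℕ) : RatFunc ℚ :=
  let x := (b + c - a) / 2
  let y := (a + c - b) / 2
  let z := (a + b - c) / 2
  Δfact (x + y + z) * Δfact (x - 1) * Δfact (y - 1) * Δfact (z - 1) /
    (Δfact (y + z - 1) * Δfact (z + x - 1) * Δfact (x + y - 1))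

/-! ### Auxiliary lemmas -/

lemma aux_coe_ne_zero {f : RatFunc ℚ} (hf : f ≠ 0) : (↑f : LaurentSeries ℚ) ≠ 0 := by
  intro h
  exact hf (by simpa using h)

lemma d_mul {f g : RatFunc ℚ} (hf : f ≠ 0) (hg : g ≠ 0) : d (f * g) = d f + d g := by
  unfold d
  rw [map_mul]
  exact HahnSeries.order_mul (aux_coe_ne_zero hf) (aux_coe_ne_zero hg)

lemma d_div {f g : RatFunc ℚ} (hf : f ≠ 0) (hg : g ≠ 0) : d (f / g) = d f - d g := by
  have h : f / g ≠ 0 := div_ne_zero hf hg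
  have := d_mul h hg
  rw [div_mul_cancel₀ _ hg] at this
  omega

lemma d_X : d (RatFunc.X : RatFunc ℚ) = 1 := by
  unfold d
  rw [RatFunc.coe_X]
  exact HahnSeries.order_single one_ne_zero

lemma d_one : d (1 : RatFunc ℚ) = 0 := by
  unfold d; rw [map_one]; exact HahnSeries.order_one

lemma d_neg (f : RatFunc ℚ) : d (-f) = d f := by
  unfold d; rw [map_neg]; exact HahnSeries.order_neg

lemma d_pow {f : RatFunc ℚ} (hf : f ≠ 0) (k : ℕ) : d (f ^ k) = k * d f := by
  induction k with
  | zero => simpa using d_one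
  | succ m ih =>
    rw [pow_succ, d_mul (pow_ne_zero m hf) hf, ih]
    push_cast; ring

lemma coe_X_pow_sub_one (k : ℕ) :
    ((RatFunc.X ^ k - 1 : RatFunc ℚ) : LaurentSeries ℚ)
      = HahnSeries.single (k : ℤ) 1 - 1 := by
  rw [map_sub, map_pow, RatFunc.coe_X,
    HahnSeries.single_pow, map_one]
  norm_num

lemma X_pow_sub_one_ne_zero {k : ℕ} (hk : 1 ≤ k) : (RatFunc.X ^ k - 1 : RatFunc ℚ) ≠ 0 := by
  intro h
  have h2 : ((RatFunc.X ^ k - 1 : RatFunc ℚ) : LaurentSeries ℚ).coeff 0 = -1 := by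
    rw [coe_X_pow_sub_one, HahnSeries.coeff_sub, HahnSeries.coeff_one,
      HahnSeries.coeff_single_of_ne (by exact_mod_cast by omega : (0:ℤ) ≠ (k:ℤ))]
    norm_num
  rw [h] at h2
  simp at h2

lemma d_X_pow_sub_one {k : ℕ} (hk : 1 ≤ k) : d (RatFunc.X ^ k - 1 : RatFunc ℚ) = 0 := by
  unfold d
  set S : LaurentSeries ℚ := ((RatFunc.X ^ k - 1 : RatFunc ℚ) : LaurentSeries ℚ) with hS
  have hcoeff : ∀ a : ℤ, a ≠ 0 → a ≠ (k : ℤ) → S.coeff a = 0 := by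
    intro a h0 hk'
    rw [hS, coe_X_pow_sub_one, HahnSeries.coeff_sub, HahnSeries.coeff_one,
      HahnSeries.coeff_single_of_ne hk', if_neg h0, sub_zero]
  have h0 : S.coeff 0 = -1 := by
    rw [hS, coe_X_pow_sub_one, HahnSeries.coeff_sub, HahnSeries.coeff_one,
      HahnSeries.coeff_single_of_ne (by exact_mod_cast by omega : (0:ℤ) ≠ (k:ℤ))]
    norm_num
  have hne : S ≠ 0 := by
    intro h; rw [h] at h0; simp at h0
  have hle : S.order ≤ 0 := HahnSeries.order_le_of_coeff_ne_zero (by rw [h0]; norm_num)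
  have hge : 0 ≤ S.order := by
    by_contra h
    push_neg at h
    have := mt HahnSeries.coeff_order_eq_zero.mp hne
    exact this (hcoeff _ (by omega) (by omega))
  omega

lemma aux_key (a : ℕ) : (RatFunc.X : RatFunc ℚ)^(a:ℤ) - RatFunc.X^(-(a:ℤ))
    = (RatFunc.X^(2*a) - 1)/RatFunc.X^a := by
  rw [zpow_neg, zpow_natCast]
  rw [eq_div_iff (pow_ne_zero _ RatFunc.X_ne_zero)]
  rw [sub_mul, inv_mul_cancel₀ (pow_ne_zero _ RatFunc.X_ne_zero), ← pow_add, two_mul]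

lemma Δ_eq (m : ℕ) : Δ m = (-1)^m *
    (((RatFunc.X^(4*m+4) - 1)/RatFunc.X^(2*m+2)) / ((RatFunc.X^4-1)/RatFunc.X^2)) := by
  unfold Δ
  have e1 : (2 * (m:ℤ) + 2) = ((2*m+2 : ℕ) : ℤ) := by push_cast; ring
  have e2 : (2 : ℤ) = ((2 : ℕ) : ℤ) := by norm_num
  rw [e1, e2, aux_key, aux_key]
  have : 2*(2*m+2) = 4*m+4 := by ring
  rw [this]

lemma aux_num_ne_zero (m : ℕ) :
    ((RatFunc.X^(4*m+4) - 1)/RatFunc.X^(2*m+2) : RatFunc ℚ) ≠ 0 :=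
  div_ne_zero (X_pow_sub_one_ne_zero (by omega)) (pow_ne_zero _ RatFunc.X_ne_zero)

lemma aux_den_ne_zero : ((RatFunc.X^4 - 1)/RatFunc.X^2 : RatFunc ℚ) ≠ 0 :=
  div_ne_zero (X_pow_sub_one_ne_zero (by omega)) (pow_ne_zero _ RatFunc.X_ne_zero)

lemma Δ_ne_zero (m : ℕ) : Δ m ≠ 0 := by
  rw [Δ_eq]
  exact mul_ne_zero (pow_ne_zero _ (by norm_num))
    (div_ne_zero (aux_num_ne_zero m) aux_den_ne_zero)

lemma d_sign_mul (m : ℕ) {f : RatFunc ℚ} : d ((-1)^m * f) = d f := by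
  rcases Nat.even_or_odd m with h | h
  · rw [h.neg_one_pow, one_mul]
  · rw [h.neg_one_pow, neg_one_mul, d_neg]

lemma d_Δ (m : ℕ) : d (Δ m) = -(2 * (m : ℤ)) := by
  rw [Δ_eq, d_sign_mul, d_div (aux_num_ne_zero m) aux_den_ne_zero,
    d_div (X_pow_sub_one_ne_zero (by omega)) (pow_ne_zero _ RatFunc.X_ne_zero),
    d_div (X_pow_sub_one_ne_zero (by omega)) (pow_ne_zero _ RatFunc.X_ne_zero),
    d_X_pow_sub_one (by omega), d_X_pow_sub_one (by omega),
    d_pow RatFunc.X_ne_zero, d_pow RatFunc.X_ne_zero, d_X]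
  push_cast; ring

lemma Δfact_ne_zero (m : ℕ) : Δfact m ≠ 0 := by
  induction m with
  | zero => simp [Δfact]
  | succ k ih => exact mul_ne_zero (Δ_ne_zero (k+1)) ih

lemma d_Δfact (m : ℕ) : d (Δfact m) = -((m : ℤ) * (m + 1)) := by
  induction m with
  | zero => simpa [Δfact] using d_one
  | succ k ih =>
    show d (Δ (k+1) * Δfact k) = _
    rw [d_mul (Δ_ne_zero (k+1)) (Δfact_ne_zero k), d_Δ, ih]
    push_cast; ring

lemma θ_eq (n j : ℕ) (hjn : j ≤ n) : θ n n (2*j) =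
    Δfact (n+j) * Δfact (j-1) * Δfact (j-1) * Δfact (n-j-1) /
      (Δfact (n-1) * Δfact (n-1) * Δfact (2*j-1)) := by
  have e1 : (n + 2*j - n)/2 = j := by omega
  have e2 : (n + n - 2*j)/2 = n - j := by omega
  have e3 : j + j + (n - j) = n + j := by omega
  have e4 : j + (n - j) - 1 = n - 1 := by omega
  have e5 : (n - j) + j - 1 = n - 1 := by omega
  have e6 : j + j - 1 = 2*j - 1 := by omega
  simp only [θ, e1, e2, e3, e4, e5, e6]

lemma θ_ne_zero (n j : ℕ) (hjn : j ≤ n) : θ n n (2*j) ≠ 0 := by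
  rw [θ_eq n j hjn]
  exact div_ne_zero
    (mul_ne_zero (mul_ne_zero (mul_ne_zero (Δfact_ne_zero _) (Δfact_ne_zero _))
      (Δfact_ne_zero _)) (Δfact_ne_zero _))
    (mul_ne_zero (mul_ne_zero (Δfact_ne_zero _) (Δfact_ne_zero _)) (Δfact_ne_zero _))

lemma d_θ (n j : ℕ) (hjn : j ≤ n) : d (θ n n (2*j)) =
    -(((n+j : ℕ) : ℤ) * ((n+j : ℕ) + 1)) - (((j-1 : ℕ) : ℤ) * ((j-1 : ℕ) + 1))
      - (((j-1 : ℕ) : ℤ) * ((j-1 : ℕ) + 1)) - (((n-j-1 : ℕ) : ℤ) * ((n-j-1 : ℕ) + 1))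
      + (((n-1 : ℕ) : ℤ) * ((n-1 : ℕ) + 1)) + (((n-1 : ℕ) : ℤ) * ((n-1 : ℕ) + 1))
      + (((2*j-1 : ℕ) : ℤ) * ((2*j-1 : ℕ) + 1)) := by
  rw [θ_eq n j hjn,
    d_div (mul_ne_zero (mul_ne_zero (mul_ne_zero (Δfact_ne_zero _) (Δfact_ne_zero _))
        (Δfact_ne_zero _)) (Δfact_ne_zero _))
      (mul_ne_zero (mul_ne_zero (Δfact_ne_zero _) (Δfact_ne_zero _)) (Δfact_ne_zero _)),
    d_mul (mul_ne_zero (mul_ne_zero (Δfact_ne_zero _) (Δfact_ne_zero _)) (Δfact_ne_zero _))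
      (Δfact_ne_zero _),
    d_mul (mul_ne_zero (Δfact_ne_zero _) (Δfact_ne_zero _)) (Δfact_ne_zero _),
    d_mul (Δfact_ne_zero _) (Δfact_ne_zero _),
    d_mul (mul_ne_zero (Δfact_ne_zero _) (Δfact_ne_zero _)) (Δfact_ne_zero _),
    d_mul (Δfact_ne_zero _) (Δfact_ne_zero _)]
  simp only [d_Δfact]
  ring

/-- For `n ≥ 1` and `1 ≤ j ≤ n`,
`d(Δ_{2j}/θ(n,n,2j)) = d(Δ_{2(j-1)}/θ(n,n,2(j-1))) - 2`. -/
theorem d_fusion (n j : ℕ) (hn : 1 ≤ n) (hj : 1 ≤ j) (hjn : j ≤ n) :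
    d (Δ (2 * j) / θ n n (2 * j)) = d (Δ (2 * (j - 1)) / θ n n (2 * (j - 1))) - 2 := by
  rw [d_div (Δ_ne_zero _) (θ_ne_zero n j hjn),
    d_div (Δ_ne_zero _) (θ_ne_zero n (j-1) (by omega)),
    d_Δ, d_Δ, d_θ n j hjn, d_θ n (j-1) (by omega)]
  have c1 : ((n + j : ℕ) : ℤ) = n + j := by push_cast; ring
  have c2 : ((j - 1 : ℕ) : ℤ) = (j : ℤ) - 1 := by omega
  have c3 : ((n - 1 : ℕ) : ℤ) = (n : ℤ) - 1 := by omega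
  have c4 : ((2*j - 1 : ℕ) : ℤ) = 2*(j : ℤ) - 1 := by omega
  have c5 : ((2*j : ℕ) : ℤ) = 2*(j : ℤ) := by push_cast; ring
  have c6 : ((n + (j - 1) : ℕ) : ℤ) = (n : ℤ) + j - 1 := by omega
  have c7 : ((n - (j-1) - 1 : ℕ) : ℤ) = (n : ℤ) - j := by omega
  have c8 : ((2*(j-1) : ℕ) : ℤ) = 2*(j : ℤ) - 2 := by omega
  rw [c1, c2, c3, c4, c5, c6, c7, c8]
  rcases eq_or_lt_of_le hjn with rfl | hlt
  · have c9 : ((j - j - 1 : ℕ) : ℤ) = 0 := by omega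
    rw [c9]
    rcases eq_or_lt_of_le hj with h1 | h1
    · have c10 : ((j - 1 - 1 : ℕ) : ℤ) = 0 := by omega
      have c11 : ((2*(j-1) - 1 : ℕ) : ℤ) = 0 := by omega
      rw [c10, c11, show (j:ℤ) = 1 by omega]
      ring
    · have c10 : ((j - 1 - 1 : ℕ) : ℤ) = (j : ℤ) - 2 := by omega
      have c11 : ((2*(j-1) - 1 : ℕ) : ℤ) = 2*(j : ℤ) - 3 := by omega
      rw [c10, c11]
      ring
  · have c9 : ((n - j - 1 : ℕ) : ℤ) = (n : ℤ) - j - 1 := by omega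
    rw [c9]
    rcases eq_or_lt_of_le hj with h1 | h1
    · have c10 : ((j - 1 - 1 : ℕ) : ℤ) = 0 := by omega
      have c11 : ((2*(j-1) - 1 : ℕ) : ℤ) = 0 := by omega
      rw [c10, c11, show (j:ℤ) = 1 by omega]
      ring
    · have c10 : ((j - 1 - 1 : ℕ) : ℤ) = (j : ℤ) - 2 := by omega
      have c11 : ((2*(j-1) - 1 : ℕ) : ℤ) = 2*(j : ℤ) - 3 := by omega
      rw [c10, c11]
      ring
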